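/- Let P be a compact topological space, and suppose ξ : P × [0,1] → C^{2n} is continuous with continuous derivative ∂ξ/∂s, and ∂ξ/∂s(p,s) ≠ 0 for all (p,s) ∈ P × [0,1]. Then there exist finitely many compact sets U_1, …, U_m covering P, compact sets V_j with U_j ⊆ int V_j, pairwise disjoint closed subintervals I_1, …, I_m of [0,1], and indices k(1), …, k(m) ∈ {1, …, 2n} such that the k(j)-th coordinate of ∂ξ/∂s(p,s) is nonzero for all s ∈ I_j and p ∈ V_j. -/
import Mathlib


open Set

/-- Disjointness of two closed intervals when the first ends before the second begins. -/
lemma aux_Icc_disjoint {a₁ b₁ a₂ b₂ : ℝ} (h : b₁ < a₂) :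
    Disjoint (Icc a₁ b₁) (Icc a₂ b₂) := by
  rw [Set.disjoint_left]
  rintro x ⟨_, hxb⟩ ⟨hxa, _⟩
  exact absurd (hxb.trans_lt h) (not_lt.2 hxa)

/-- Compactness covering argument: if `ξ : P × [0,1] → ℂ^{2n}` is a continuous family of paths
with continuous, nowhere vanishing derivative `∂ξ/∂s`, then there are finitely many compact
sets `U_1, …, U_m` covering `P`, compact sets `V_j` with `U_j ⊆ int V_j`, pairwise disjoint
closed subintervals `I_1, …, I_m ⊆ [0,1]` and coordinate indices `k(j)` such that the `k(j)`-th
coordinate of `∂ξ/∂s` is nonzero on `V_j × I_j`. -/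
theorem covering_nonvanishing_coordinate (n : ℕ) (P : Type) [TopologicalSpace P]
    [CompactSpace P] (ξ ξ' : P × ℝ → Fin (2 * n) → ℂ)
    (hcont : Continuous ξ)
    (hderiv : ∀ (p : P), ∀ s ∈ Icc (0:ℝ) 1, HasDerivAt (fun t => ξ (p, t)) (ξ' (p, s)) s)
    (hcont' : ContinuousOn ξ' {q : P × ℝ | q.2 ∈ Icc (0:ℝ) 1})
    (hne : ∀ (p : P), ∀ s ∈ Icc (0:ℝ) 1, ξ' (p, s) ≠ 0) :
    ∃ (m : ℕ) (U V : Fin m → Set P) (a b : Fin m → ℝ) (k : Fin m → Fin (2 * n)),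
      (∀ j, IsCompact (U j)) ∧ (⋃ j, U j) = univ ∧
      (∀ j, IsCompact (V j) ∧ U j ⊆ interior (V j)) ∧
      (∀ j, a j ≤ b j ∧ Icc (a j) (b j) ⊆ Icc (0:ℝ) 1) ∧
      (∀ i j, i ≠ j → Disjoint (Icc (a i) (b i)) (Icc (a j) (b j))) ∧
      (∀ j, ∀ p ∈ V j, ∀ s ∈ Icc (a j) (b j), ξ' (p, s) (k j) ≠ 0) := by
  classical
  set S : Set (P × ℝ) := {q : P × ℝ | q.2 ∈ Icc (0:ℝ) 1} with hS
  by_cases hP : Nonempty P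
  swap
  · -- empty case
    refine ⟨0, Fin.elim0, Fin.elim0, Fin.elim0, Fin.elim0, Fin.elim0,
      fun j => j.elim0, ?_, fun j => j.elim0, fun j => j.elim0,
      fun i => i.elim0, fun j => j.elim0⟩
    apply Set.eq_univ_of_forall
    intro p
    exact (hP ⟨p⟩).elim
  -- continuity of the norm of a fixed coordinate, as functions on S
  have hcontk : ∀ k : Fin (2 * n), ContinuousOn (fun q => ‖ξ' q k‖) S := by
    intro k
    exact ((continuous_norm.comp (continuous_apply k)).comp_continuousOn hcont')
  have hcontks : ∀ (k : Fin (2 * n)) (s : ℝ), s ∈ Icc (0:ℝ) 1 →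
      Continuous (fun p : P => ‖ξ' (p, s) k‖) := by
    intro k s hs
    exact (hcontk k).comp_continuous (Continuous.prodMk_left s) fun p => hs
  -- Step 1: around each point p, a box on which one coordinate is bounded below
  have step1 : ∀ p : P, ∃ (k : Fin (2 * n)) (W : Set P) (c θ : ℝ),
      IsOpen W ∧ p ∈ W ∧ 0 < c ∧ 0 < θ ∧
      ∀ q ∈ W, ∀ s : ℝ, 0 ≤ s → s ≤ c → s ≤ 1 → θ < ‖ξ' (q, s) k‖ := by
    intro p
    have h0 : (0:ℝ) ∈ Icc (0:ℝ) 1 := ⟨le_refl 0, zero_le_one⟩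
    obtain ⟨k, hk⟩ := Function.ne_iff.1 (hne p 0 h0)
    have hk' : ξ' (p, 0) k ≠ 0 := by simpa using hk
    have hε : 0 < ‖ξ' (p, 0) k‖ := norm_pos_iff.2 hk'
    set θ : ℝ := ‖ξ' (p, 0) k‖ / 2 with hθ
    have hmem : (p, (0:ℝ)) ∈ S := h0
    have hcw : ContinuousWithinAt (fun q => ‖ξ' q k‖) S (p, 0) := (hcontk k) _ hmem
    have hIoi : Ioi θ ∈ nhds ‖ξ' (p, (0:ℝ)) k‖ := Ioi_mem_nhds (half_lt_self hε)
    have h1 := hcw hIoi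
    rw [Filter.mem_map, mem_nhdsWithin] at h1
    obtain ⟨t, ht_open, ht_mem, ht_sub⟩ := h1
    obtain ⟨u, v, hu_open, hpu, hv_open, h0v, huv⟩ :=
      mem_nhds_prod_iff'.1 (ht_open.mem_nhds ht_mem)
    obtain ⟨c, hc_pos, hc_ball⟩ := Metric.isOpen_iff.1 hv_open 0 h0v
    refine ⟨k, u, c / 2, θ, hu_open, hpu, by positivity, by positivity, ?_⟩
    intro q hq s hs0 hsc hs1
    have hsv : s ∈ v := hc_ball (by
      rw [Metric.mem_ball, Real.dist_eq, sub_zero, abs_of_nonneg hs0]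
      linarith)
    have hqs : (q, s) ∈ t := huv ⟨hq, hsv⟩
    have hqsS : (q, s) ∈ S := ⟨hs0, hs1⟩
    exact ht_sub ⟨hqs, hqsS⟩
  choose kk WW cc θθ hWopen hWmem hcpos hθpos hbound using step1
  -- Step 2: finite subcover
  obtain ⟨T, hT⟩ := CompactSpace.elim_nhds_subcover WW fun p => (hWopen p).mem_nhds (hWmem p)
  have hTne : T.Nonempty := by
    obtain ⟨p⟩ := hP
    have : p ∈ ⋃ x ∈ T, WW x := by rw [hT]; trivial
    obtain ⟨q, hq, -⟩ := mem_iUnion₂.1 this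
    exact ⟨q, hq⟩
  set c : ℝ := T.inf' hTne (fun p => min (cc p) 1) with hc
  have hc_pos : 0 < c := by
    rw [hc, Finset.lt_inf'_iff]
    exact fun p _ => lt_min (hcpos p) one_pos
  have hc_le : ∀ p ∈ T, c ≤ cc p := fun p hp =>
    (Finset.inf'_le _ hp).trans (min_le_left _ _)
  have hc_le1 : c ≤ 1 := by
    obtain ⟨p, hp⟩ := hTne
    exact (Finset.inf'_le _ hp).trans (min_le_right _ _)
  set m : ℕ := T.card with hm
  set e : Fin m → P := fun j => ((T.equivFin.symm j : _) : P) with he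
  have heT : ∀ j, e j ∈ T := fun j => (T.equivFin.symm j).2
  -- the sets
  set U : Fin m → Set P :=
    fun j => {q | ∀ s ∈ Icc (0:ℝ) c, θθ (e j) ≤ ‖ξ' (q, s) (kk (e j))‖} with hU
  set V : Fin m → Set P :=
    fun j => {q | ∀ s ∈ Icc (0:ℝ) c, θθ (e j) / 2 ≤ ‖ξ' (q, s) (kk (e j))‖} with hV
  have hIccsub : Icc (0:ℝ) c ⊆ Icc (0:ℝ) 1 := Icc_subset_Icc le_rfl hc_le1
  -- closedness of sublevel-type sets
  have hclosed : ∀ (k : Fin (2 * n)) (θ : ℝ),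
      IsClosed {q : P | ∀ s ∈ Icc (0:ℝ) c, θ ≤ ‖ξ' (q, s) k‖} := by
    intro k θ
    have : {q : P | ∀ s ∈ Icc (0:ℝ) c, θ ≤ ‖ξ' (q, s) k‖} =
        ⋂ s ∈ Icc (0:ℝ) c, {q : P | θ ≤ ‖ξ' (q, s) k‖} := by
      ext q; simp [mem_iInter]
    rw [this]
    exact isClosed_biInter fun s hs =>
      isClosed_le continuous_const (hcontks k s (hIccsub hs))
  have hUcomp : ∀ j, IsCompact (U j) := fun j => (hclosed _ _).isCompact
  have hVcomp : ∀ j, IsCompact (V j) := fun j => (hclosed _ _).isCompact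
  -- U covers P
  have hUcover : (⋃ j, U j) = univ := by
    apply eq_univ_of_forall
    intro q
    have : q ∈ ⋃ p ∈ T, WW p := by rw [hT]; trivial
    obtain ⟨p, hpT, hqW⟩ := mem_iUnion₂.1 this
    refine mem_iUnion.2 ⟨T.equivFin ⟨p, hpT⟩, ?_⟩
    have hep : e (T.equivFin ⟨p, hpT⟩) = p := by
      simp [he]
    rw [hU]
    intro s hs
    rw [hep]
    exact le_of_lt (hbound p q hqW s hs.1 (hs.2.trans (hc_le p hpT)) (hs.2.trans hc_le1))
  -- U j ⊆ interior (V j)  (tube lemma argument)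
  have hUV : ∀ j, U j ⊆ interior (V j) := by
    intro j p hp
    set k := kk (e j)
    set θ := θθ (e j)
    have hθp : 0 < θ := hθpos (e j)
    -- for each s ∈ [0,c], find a box around (p,s) where the norm stays > θ/2
    have key : ∀ s ∈ Icc (0:ℝ) c, ∃ (u : Set P) (v : Set ℝ),
        IsOpen u ∧ p ∈ u ∧ IsOpen v ∧ s ∈ v ∧
        ∀ q ∈ u, ∀ s' ∈ v, s' ∈ Icc (0:ℝ) 1 → θ / 2 < ‖ξ' (q, s') k‖ := by
      intro s hs
      have hmemS : (p, s) ∈ S := hIccsub hs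
      have hcw : ContinuousWithinAt (fun q => ‖ξ' q k‖) S (p, s) := (hcontk k) _ hmemS
      have hval : θ / 2 < ‖ξ' (p, s) k‖ :=
        lt_of_lt_of_le (by linarith) (hp s hs)
      have hIoi : Ioi (θ / 2) ∈ nhds ‖ξ' (p, s) k‖ := Ioi_mem_nhds hval
      have h1 := hcw hIoi
      rw [Filter.mem_map, mem_nhdsWithin] at h1
      obtain ⟨t, ht_open, ht_mem, ht_sub⟩ := h1
      obtain ⟨u, v, hu_open, hpu, hv_open, hsv, huv⟩ :=
        mem_nhds_prod_iff'.1 (ht_open.mem_nhds ht_mem)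
      exact ⟨u, v, hu_open, hpu, hv_open, hsv, fun q hq s' hs' hs'1 =>
        ht_sub ⟨huv ⟨hq, hs'⟩, hs'1⟩⟩
    choose! uu vv huopen hpu hvopen hsv hbox using key
    -- cover Icc 0 c by the vv's
    obtain ⟨F, hF⟩ := (isCompact_Icc (a := (0:ℝ)) (b := c)).elim_finite_subcover
      (fun s : Icc (0:ℝ) c => vv s) (fun s => hvopen s s.2)
      (fun s hs => mem_iUnion.2 ⟨⟨s, hs⟩, hsv s hs⟩)
    set u : Set P := ⋂ s ∈ F, uu s with hu
    have hu_open : IsOpen u := isOpen_biInter_finset fun s _ => huopen s s.2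
    have hpu' : p ∈ u := mem_iInter₂.2 fun s _ => hpu s s.2
    have husub : u ⊆ V j := by
      intro q hq s' hs'
      obtain ⟨s, hsF, hs'v⟩ := mem_iUnion₂.1 (hF hs')
      have hqu : q ∈ uu s := (mem_iInter₂.1 hq) s hsF
      exact le_of_lt (hbox s s.2 q hqu s' hs'v (hIccsub hs'))
    exact mem_interior.2 ⟨u, husub, hu_open, hpu'⟩
  -- intervals
  set a : Fin m → ℝ := fun j => c * (2 * j) / (2 * m) with ha
  set b : Fin m → ℝ := fun j => c * (2 * j + 1) / (2 * m) with hb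
  have hm_pos : (0:ℝ) < 2 * m := by
    have : 0 < m := Finset.card_pos.2 hTne
    positivity
  have hab : ∀ j : Fin m, a j ≤ b j := by
    intro j
    rw [ha, hb]
    apply (div_le_div_iff_of_pos_right hm_pos).2
    nlinarith [hc_pos.le]
  have hbc : ∀ j : Fin m, b j ≤ c := by
    intro j
    rw [hb, div_le_iff₀ hm_pos]
    have hj : (j : ℝ) + 1 ≤ m := by exact_mod_cast j.2
    nlinarith [hc_pos.le]
  have ha0 : ∀ j : Fin m, 0 ≤ a j := by
    intro j
    rw [ha]
    have : (0:ℝ) ≤ 2 * (j:ℝ) := by positivity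
    exact div_nonneg (mul_nonneg hc_pos.le this) hm_pos.le
  refine ⟨m, U, V, a, b, fun j => kk (e j), hUcomp, hUcover,
    fun j => ⟨hVcomp j, hUV j⟩, ?_, ?_, ?_⟩
  · exact fun j => ⟨hab j, Icc_subset_Icc (ha0 j) ((hbc j).trans hc_le1)⟩
  · -- disjointness
    intro i j hij
    have key : ∀ i j : Fin m, (i : ℕ) < j →
        Disjoint (Icc (a i) (b i)) (Icc (a j) (b j)) := by
      intro i j hlt
      apply aux_Icc_disjoint
      rw [hb, ha]
      apply (div_lt_div_iff_of_pos_right hm_pos).2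
      have : (i : ℝ) + 1 ≤ j := by exact_mod_cast hlt
      nlinarith [hc_pos]
    rcases lt_or_gt_of_ne (fun h => hij (Fin.ext h)) with h | h
    · exact key i j h
    · exact (key j i h).symm
  · -- nonvanishing on V j × I j
    intro j q hq s hs
    have hsIcc : s ∈ Icc (0:ℝ) c := ⟨(ha0 j).trans hs.1, hs.2.trans (hbc j)⟩
    have h1 := hq s hsIcc
    intro h0
    rw [h0, norm_zero] at h1
    linarith [hθpos (e j)]
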